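/- If an mm-space X satisfies the curvature-dimension condition CD(K, ∞) for a real number K > 0, then for any κ₀, κ₁ > 0 with κ₀ + κ₁ < 1, Sep(X; κ₀, κ₁) ≤ √((4/K) · log(1/(κ₀κ₁))). -/

import Mathlib

open MeasureTheory
open scoped ENNReal Classical

/-- `U(r) = r log r` (with `U(0) = 0`, since `Real.log 0 = 0`). -/
noncomputable def entFun (r : ℝ) : ℝ := r * Real.log r

/-- The relative entropy `Ent(ν | μ)`, valued in `EReal`. -/
noncomputable def relEnt {X : Type*} [MeasurableSpace X] (ν μ : Measure X) : EReal :=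
  if ν ≪ μ ∧ Integrable (fun x => entFun (ν.rnDeriv μ x).toReal) μ then
    ((∫ x, entFun (ν.rnDeriv μ x).toReal ∂μ : ℝ) : EReal)
  else ⊤

/-- The `L₂`-Wasserstein distance: the infimum over transport plans `π` between
`μ` and `ν` of `(∫ d(x, y)² dπ)^{1/2}`. -/
noncomputable def W2 {X : Type*} [PseudoEMetricSpace X] [MeasurableSpace X]
    (μ ν : Measure X) : ℝ≥0∞ :=
  ⨅ (π : Measure (X × X)) (_ : π.map Prod.fst = μ) (_ : π.map Prod.snd = ν),
    (∫⁻ p, edist p.1 p.2 ^ 2 ∂π) ^ (1 / 2 : ℝ)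

/-- Membership in `P₂(X)`: finiteness of the second moment. -/
def HasFiniteSecondMoment {X : Type*} [PseudoEMetricSpace X] [MeasurableSpace X]
    (ν : Measure X) : Prop :=
  ∃ x₀ : X, ∫⁻ x, edist x₀ x ^ 2 ∂ν < ⊤

/-- The curvature-dimension condition `CD(K, ∞)` for an mm-space `(X, μ)`. -/
def CDInfty {X : Type*} [PseudoEMetricSpace X] [MeasurableSpace X]
    (μ : Measure X) (K : ℝ) : Prop :=
  ∀ ν₀ ν₁ : Measure X, IsProbabilityMeasure ν₀ → IsProbabilityMeasure ν₁ →
    HasFiniteSecondMoment ν₀ → HasFiniteSecondMoment ν₁ →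
    ∀ ε : ℝ, 0 < ε → ∀ t : ℝ, t ∈ Set.Ioo (0 : ℝ) 1 →
      ∃ νt : Measure X, IsProbabilityMeasure νt ∧ HasFiniteSecondMoment νt ∧
        W2 νt ν₀ ≤ ENNReal.ofReal t * W2 ν₀ ν₁ + ENNReal.ofReal ε ∧
        W2 νt ν₁ ≤ ENNReal.ofReal (1 - t) * W2 ν₀ ν₁ + ENNReal.ofReal ε ∧
        relEnt νt μ ≤ ((1 - t : ℝ) : EReal) * relEnt ν₀ μ + ((t : ℝ) : EReal) * relEnt ν₁ μ
          - ((K / 2 * (t * (1 - t)) : ℝ) : EReal) * ((W2 ν₀ ν₁ ^ 2 : ℝ≥0∞) : EReal)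
          + ((ε : ℝ) : EReal)

/-- `d_X(A, B)` for subsets, valued in `[0, ∞]`. -/
noncomputable def setSep {X : Type*} [PseudoEMetricSpace X] (A B : Set X) : ℝ≥0∞ :=
  ⨅ (x ∈ A) (y ∈ B), edist x y

/-- The separation distance `Sep(X; κ₀, κ₁)`. -/
noncomputable def sep2 {X : Type*} [PseudoEMetricSpace X] [MeasurableSpace X]
    (μ : Measure X) (κ₀ κ₁ : ℝ) : ℝ≥0∞ :=
  ⨆ (A₀ : Set X) (A₁ : Set X) (_ : MeasurableSet A₀) (_ : MeasurableSet A₁)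
    (_ : ENNReal.ofReal κ₀ ≤ μ A₀) (_ : ENNReal.ofReal κ₁ ≤ μ A₁), setSep A₀ A₁

/-! ### Auxiliary lemmas -/

lemma sub_one_le_entFun {r : ℝ} (hr : 0 ≤ r) : r - 1 ≤ entFun r := by
  rcases eq_or_lt_of_le hr with h | h
  · simp [entFun, ← h]
  · have h1 : Real.log r⁻¹ ≤ r⁻¹ - 1 := Real.log_le_sub_one_of_pos (by positivity)
    rw [Real.log_inv] at h1
    have := mul_le_mul_of_nonneg_left h1 h.le
    rw [mul_sub, mul_inv_cancel₀ h.ne'] at this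
    rw [entFun]
    nlinarith [this]

lemma relEnt_nonneg {X : Type*} [MeasurableSpace X] (ν μ : Measure X)
    [IsProbabilityMeasure ν] [IsProbabilityMeasure μ] : (0 : EReal) ≤ relEnt ν μ := by
  rw [relEnt]
  split_ifs with h
  · obtain ⟨hac, hint⟩ := h
    have h1 : ∫ x, ((ν.rnDeriv μ x).toReal - 1) ∂μ = 0 := by
      rw [integral_sub Measure.integrable_toReal_rnDeriv (integrable_const 1)]
      rw [Measure.integral_toReal_rnDeriv hac]
      simp
    have h2 : ∫ x, ((ν.rnDeriv μ x).toReal - 1) ∂μ ≤ ∫ x, entFun (ν.rnDeriv μ x).toReal ∂μ := by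
      refine integral_mono (Measure.integrable_toReal_rnDeriv.sub (integrable_const 1)) hint ?_
      intro x
      exact sub_one_le_entFun ENNReal.toReal_nonneg
    rw [h1] at h2
    exact_mod_cast h2
  · exact le_top

lemma relEnt_restrict {X : Type*} [MeasurableSpace X] (μ : Measure X) [IsProbabilityMeasure μ]
    {A : Set X} (hA : MeasurableSet A) (ha : μ A ≠ 0) :
    relEnt ((μ A)⁻¹ • μ.restrict A) μ = ((-Real.log (μ A).toReal : ℝ) : EReal) := by
  set a : ℝ≥0∞ := μ A with ha_def
  have haT : a ≠ ⊤ := measure_ne_top μ A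
  have hat : 0 < a.toReal := ENNReal.toReal_pos ha haT
  set ν : Measure X := a⁻¹ • μ.restrict A with hν
  have hac : ν ≪ μ := by
    intro s hs
    have : μ.restrict A s = 0 := le_antisymm ((Measure.restrict_le_self s).trans hs.le) zero_le
    simp [hν, this]
  have hd : ν.rnDeriv μ =ᵐ[μ] fun x => a⁻¹ * A.indicator 1 x := by
    have h1 : ν.rnDeriv μ =ᵐ[μ] a⁻¹ • (μ.restrict A).rnDeriv μ :=
      Measure.rnDeriv_smul_left_of_ne_top (μ.restrict A) μ (ENNReal.inv_ne_top.2 ha)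
    have h2 : (μ.restrict A).rnDeriv μ =ᵐ[μ] A.indicator 1 :=
      Measure.rnDeriv_restrict_self μ hA
    filter_upwards [h1, h2] with x hx1 hx2
    rw [hx1]
    simp [hx2]
  have hcomp : (fun x => entFun (ν.rnDeriv μ x).toReal)
      =ᵐ[μ] A.indicator (fun _ => entFun (a.toReal)⁻¹) := by
    filter_upwards [hd] with x hx
    rw [hx]
    by_cases hxA : x ∈ A
    · simp only [Set.indicator_of_mem hxA, Pi.one_apply, mul_one]
      rw [ENNReal.toReal_inv]
    · simp [Set.indicator_of_notMem hxA, entFun]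
  have hint : Integrable (fun x => entFun (ν.rnDeriv μ x).toReal) μ :=
    (Integrable.indicator (integrable_const _) hA).congr hcomp.symm
  rw [relEnt, if_pos ⟨hac, hint⟩]
  congr 1
  rw [integral_congr_ae hcomp, integral_indicator_const _ hA, measureReal_def, ← ha_def]
  simp only [smul_eq_mul, entFun, Real.log_inv]
  field_simp

lemma prob_smul_restrict {X : Type*} [MeasurableSpace X] (μ : Measure X)
    {A : Set X} (ha : μ A ≠ 0) (haT : μ A ≠ ⊤) :
    IsProbabilityMeasure ((μ A)⁻¹ • μ.restrict A) := by
  constructor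
  rw [Measure.smul_apply, Measure.restrict_apply MeasurableSet.univ, Set.univ_inter,
    smul_eq_mul, ENNReal.inv_mul_cancel ha haT]

lemma smul_restrict_compl {X : Type*} [MeasurableSpace X] (μ : Measure X)
    {A : Set X} (hA : MeasurableSet A) :
    ((μ A)⁻¹ • μ.restrict A) Aᶜ = 0 := by
  rw [Measure.smul_apply, Measure.restrict_apply hA.compl]
  simp

/-- Lower bound of `W2` by the separation distance. -/
lemma setSep_le_W2 {X : Type*} [PseudoEMetricSpace X] [MeasurableSpace X]
    {A₀ A₁ : Set X} (hA₀ : MeasurableSet A₀) (hA₁ : MeasurableSet A₁)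
    (ν₀ ν₁ : Measure X) [IsProbabilityMeasure ν₀] [IsProbabilityMeasure ν₁]
    (h₀ : ν₀ A₀ᶜ = 0) (h₁ : ν₁ A₁ᶜ = 0) :
    setSep A₀ A₁ ≤ W2 ν₀ ν₁ := by
  rw [W2]
  refine le_iInf fun π => le_iInf fun hπ0 => le_iInf fun hπ1 => ?_
  set D := setSep A₀ A₁ with hD
  have hπ00 : π (Prod.fst ⁻¹' A₀ᶜ) = 0 := by
    rw [← Measure.map_apply measurable_fst hA₀.compl, hπ0, h₀]
  have hπ11 : π (Prod.snd ⁻¹' A₁ᶜ) = 0 := by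
    rw [← Measure.map_apply measurable_snd hA₁.compl, hπ1, h₁]
  have hπuniv : π Set.univ = 1 := by
    have : π.map Prod.fst Set.univ = 1 := by rw [hπ0]; exact measure_univ
    rwa [Measure.map_apply measurable_fst MeasurableSet.univ, Set.preimage_univ] at this
  have hcompl : π ((A₀ ×ˢ A₁)ᶜ) = 0 := by
    refine le_antisymm ?_ zero_le
    calc π ((A₀ ×ˢ A₁)ᶜ) ≤ π (Prod.fst ⁻¹' A₀ᶜ ∪ Prod.snd ⁻¹' A₁ᶜ) := by
          refine measure_mono fun p hp => ?_
          simp only [Set.mem_compl_iff, Set.mem_prod, not_and_or] at hp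
          rcases hp with hp | hp
          · exact Or.inl hp
          · exact Or.inr hp
      _ ≤ π (Prod.fst ⁻¹' A₀ᶜ) + π (Prod.snd ⁻¹' A₁ᶜ) := measure_union_le _ _
      _ = 0 := by rw [hπ00, hπ11, add_zero]
  have hprod : π (A₀ ×ˢ A₁) = 1 := by
    have h1 : π Set.univ ≤ π (A₀ ×ˢ A₁) + π ((A₀ ×ˢ A₁)ᶜ) := by
      rw [← Set.union_compl_self (A₀ ×ˢ A₁)] at hπuniv ⊢
      exact measure_union_le _ _
    rw [hcompl, add_zero, hπuniv] at h1
    exact le_antisymm (hπuniv ▸ measure_mono (Set.subset_univ _)) h1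
  have hkey : D ^ 2 ≤ ∫⁻ p, edist p.1 p.2 ^ 2 ∂π := by
    calc D ^ 2 = D ^ 2 * π (A₀ ×ˢ A₁) := by rw [hprod, mul_one]
      _ = ∫⁻ p, (A₀ ×ˢ A₁).indicator (fun _ => D ^ 2) p ∂π := by
          rw [lintegral_indicator (hA₀.prod hA₁), setLIntegral_const]
      _ ≤ ∫⁻ p, edist p.1 p.2 ^ 2 ∂π := by
          refine lintegral_mono fun p => ?_
          by_cases hp : p ∈ A₀ ×ˢ A₁
          · rw [Set.indicator_of_mem hp]
            refine pow_le_pow_left' ?_ 2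
            calc D ≤ ⨅ (y ∈ A₁), edist p.1 y := iInf₂_le p.1 hp.1
              _ ≤ edist p.1 p.2 := iInf₂_le p.2 hp.2
          · rw [Set.indicator_of_notMem hp]
            exact zero_le
  calc D = (D ^ 2) ^ (1 / 2 : ℝ) := by
        rw [← ENNReal.rpow_natCast D 2, ← ENNReal.rpow_mul]
        norm_num
    _ ≤ (∫⁻ p, edist p.1 p.2 ^ 2 ∂π) ^ (1 / 2 : ℝ) :=
        ENNReal.rpow_le_rpow hkey (by norm_num)

/-- Upper bound for `W2` of measures concentrated on a bounded set. -/
lemma W2_ne_top {X : Type*} [MetricSpace X] [MeasurableSpace X] [BorelSpace X]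
    {A₀ A₁ : Set X} (x₀ : X) (R : ℝ)
    (hB₀ : A₀ ⊆ Metric.closedBall x₀ R) (hB₁ : A₁ ⊆ Metric.closedBall x₀ R)
    (ν₀ ν₁ : Measure X) [IsProbabilityMeasure ν₀] [IsProbabilityMeasure ν₁]
    (h₀ : ν₀ A₀ᶜ = 0) (h₁ : ν₁ A₁ᶜ = 0) :
    W2 ν₀ ν₁ ≠ ⊤ := by
  set π := ν₀.prod ν₁ with hπ
  have hm0 : π.map Prod.fst = ν₀ := by
    rw [hπ, Measure.map_fst_prod, measure_univ, one_smul]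
  have hm1 : π.map Prod.snd = ν₁ := by
    rw [hπ, Measure.map_snd_prod, measure_univ, one_smul]
  have hcost : ∫⁻ p, edist p.1 p.2 ^ 2 ∂π ≤ (ENNReal.ofReal (2 * R)) ^ 2 := by
    have hae : ∀ᵐ p ∂π, edist p.1 p.2 ^ 2 ≤ (ENNReal.ofReal (2 * R)) ^ 2 := by
      have hz0 : π (Prod.fst ⁻¹' A₀ᶜ) = 0 := by
        rw [hπ, ← Set.prod_univ, Measure.prod_prod, h₀, zero_mul]
      have hz1 : π (Prod.snd ⁻¹' A₁ᶜ) = 0 := by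
        rw [hπ, ← Set.univ_prod, Measure.prod_prod, h₁, mul_zero]
      have hae0 : ∀ᵐ p ∂π, p.1 ∈ A₀ := by
        rw [ae_iff]; exact hz0
      have hae1 : ∀ᵐ p ∂π, p.2 ∈ A₁ := by
        rw [ae_iff]; exact hz1
      filter_upwards [hae0, hae1] with p hp0 hp1
      refine pow_le_pow_left' ?_ 2
      have hd : dist p.1 p.2 ≤ 2 * R := by
        have := hB₀ hp0
        have := hB₁ hp1
        rw [Metric.mem_closedBall] at *
        calc dist p.1 p.2 ≤ dist p.1 x₀ + dist x₀ p.2 := dist_triangle _ _ _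
          _ ≤ R + R := by
              rw [dist_comm x₀ p.2]
              gcongr
          _ = 2 * R := by ring
      calc edist p.1 p.2 = ENNReal.ofReal (dist p.1 p.2) := (edist_dist _ _)
        _ ≤ ENNReal.ofReal (2 * R) := ENNReal.ofReal_le_ofReal hd
    calc ∫⁻ p, edist p.1 p.2 ^ 2 ∂π ≤ ∫⁻ _, (ENNReal.ofReal (2 * R)) ^ 2 ∂π :=
          lintegral_mono_ae hae
      _ = (ENNReal.ofReal (2 * R)) ^ 2 := by
          rw [lintegral_const, measure_univ, mul_one]
  have hW : W2 ν₀ ν₁ ≤ ((ENNReal.ofReal (2 * R)) ^ 2) ^ (1 / 2 : ℝ) := by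
    rw [W2]
    refine iInf_le_of_le π (iInf_le_of_le hm0 (iInf_le_of_le hm1 ?_))
    exact ENNReal.rpow_le_rpow hcost (by norm_num)
  refine ne_top_of_le_ne_top ?_ hW
  exact (ENNReal.rpow_lt_top_of_nonneg (by norm_num)
    (ENNReal.pow_ne_top ENNReal.ofReal_ne_top)).ne

/-- second moment of normalized restriction to a bounded set -/
lemma hasFiniteSecondMoment_restrict {X : Type*} [MetricSpace X] [MeasurableSpace X]
    [OpensMeasurableSpace X]
    (μ : Measure X) [IsProbabilityMeasure μ] {A : Set X} (hA : MeasurableSet A) (x₀ : X) (R : ℝ)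
    (hB : A ⊆ Metric.closedBall x₀ R) (ha : μ A ≠ 0) :
    HasFiniteSecondMoment ((μ A)⁻¹ • μ.restrict A) := by
  refine ⟨x₀, ?_⟩
  rw [lintegral_smul_measure]
  have hbound : ∫⁻ x, edist x₀ x ^ 2 ∂(μ.restrict A) ≤ (ENNReal.ofReal R) ^ 2 := by
    have h : ∀ᵐ x ∂(μ.restrict A), edist x₀ x ^ 2 ≤ (ENNReal.ofReal R) ^ 2 := by
      filter_upwards [ae_restrict_mem hA] with x hx
      refine pow_le_pow_left' ?_ 2
      have hd : dist x₀ x ≤ R := by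
        have := hB hx
        rw [Metric.mem_closedBall] at this
        rwa [dist_comm]
      calc edist x₀ x = ENNReal.ofReal (dist x₀ x) := edist_dist _ _
        _ ≤ ENNReal.ofReal R := ENNReal.ofReal_le_ofReal hd
    calc ∫⁻ x, edist x₀ x ^ 2 ∂(μ.restrict A) ≤ ∫⁻ _, (ENNReal.ofReal R) ^ 2 ∂(μ.restrict A) :=
          lintegral_mono_ae h
      _ ≤ (ENNReal.ofReal R) ^ 2 * 1 := by
          rw [lintegral_const]
          gcongr
          rw [Measure.restrict_apply MeasurableSet.univ, Set.univ_inter]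
          exact prob_le_one
      _ = (ENNReal.ofReal R) ^ 2 := mul_one _
  calc (μ A)⁻¹ * ∫⁻ x, edist x₀ x ^ 2 ∂(μ.restrict A) ≤ (μ A)⁻¹ * (ENNReal.ofReal R) ^ 2 := by
        gcongr
    _ < ⊤ := ENNReal.mul_lt_top (ENNReal.inv_lt_top.2 (pos_iff_ne_zero.2 ha))
        (ENNReal.pow_ne_top ENNReal.ofReal_ne_top).lt_top

/-- Key estimate: the separation distance of two bounded positive-measure sets. -/
lemma setSep_le_key {X : Type*} [MetricSpace X] [MeasurableSpace X] [BorelSpace X]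
    (μ : Measure X) [IsProbabilityMeasure μ]
    (K : ℝ) (hK : 0 < K) (hCD : CDInfty μ K)
    {A₀ A₁ : Set X} (hA₀ : MeasurableSet A₀) (hA₁ : MeasurableSet A₁)
    (x₀ : X) (R : ℝ) (hB₀ : A₀ ⊆ Metric.closedBall x₀ R) (hB₁ : A₁ ⊆ Metric.closedBall x₀ R)
    (ha₀ : μ A₀ ≠ 0) (ha₁ : μ A₁ ≠ 0) (ε : ℝ) (hε : 0 < ε) :
    setSep A₀ A₁ ≤ ENNReal.ofReal (Real.sqrt
      ((4 / K) * Real.log (1 / ((μ A₀).toReal * (μ A₁).toReal)) + 8 * ε / K)) := by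
  set ν₀ : Measure X := (μ A₀)⁻¹ • μ.restrict A₀ with hν₀
  set ν₁ : Measure X := (μ A₁)⁻¹ • μ.restrict A₁ with hν₁
  haveI hp₀ : IsProbabilityMeasure ν₀ := prob_smul_restrict μ ha₀ (measure_ne_top μ A₀)
  haveI hp₁ : IsProbabilityMeasure ν₁ := prob_smul_restrict μ ha₁ (measure_ne_top μ A₁)
  have hc₀ : ν₀ A₀ᶜ = 0 := smul_restrict_compl μ hA₀
  have hc₁ : ν₁ A₁ᶜ = 0 := smul_restrict_compl μ hA₁
  have hfm₀ : HasFiniteSecondMoment ν₀ :=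
    hasFiniteSecondMoment_restrict μ hA₀ x₀ R hB₀ ha₀
  have hfm₁ : HasFiniteSecondMoment ν₁ :=
    hasFiniteSecondMoment_restrict μ hA₁ x₀ R hB₁ ha₁
  obtain ⟨νt, hpt, -, -, -, hent⟩ :=
    hCD ν₀ ν₁ hp₀ hp₁ hfm₀ hfm₁ ε hε (1/2) (by norm_num)
  haveI := hpt
  set a₀ : ℝ := (μ A₀).toReal with ha₀def
  set a₁ : ℝ := (μ A₁).toReal with ha₁def
  have ha₀pos : 0 < a₀ := ENNReal.toReal_pos ha₀ (measure_ne_top μ A₀)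
  have ha₁pos : 0 < a₁ := ENNReal.toReal_pos ha₁ (measure_ne_top μ A₁)
  set W : ℝ≥0∞ := W2 ν₀ ν₁ with hWdef
  have hWne : W ≠ ⊤ := W2_ne_top x₀ R hB₀ hB₁ ν₀ ν₁ hc₀ hc₁
  set w : ℝ := W.toReal with hwdef
  have hwnn : 0 ≤ w := ENNReal.toReal_nonneg
  -- rewrite the entropy inequality in terms of reals
  have hE₀ : relEnt ν₀ μ = ((-Real.log a₀ : ℝ) : EReal) := relEnt_restrict μ hA₀ ha₀
  have hE₁ : relEnt ν₁ μ = ((-Real.log a₁ : ℝ) : EReal) := relEnt_restrict μ hA₁ ha₁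
  have hWE : ((W ^ 2 : ℝ≥0∞) : EReal) = ((w ^ 2 : ℝ) : EReal) := by
    have h1 : (W : EReal) = ((w : ℝ) : EReal) := by
      conv_lhs => rw [← ENNReal.coe_toNNReal hWne]
      rw [EReal.coe_nnreal_eq_coe_real]
      rfl
    rw [EReal.coe_ennreal_pow, h1, ← EReal.coe_pow]
  rw [hE₀, hE₁, hWE] at hent
  have h0 : (0 : EReal) ≤ relEnt νt μ := relEnt_nonneg νt μ
  have hreal : (0 : ℝ) ≤ (1 - 1/2) * (-Real.log a₀) + (1/2) * (-Real.log a₁)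
      - K / 2 * (1/2 * (1 - 1/2)) * w ^ 2 + ε := by
    have := h0.trans hent
    rw [← EReal.coe_mul, ← EReal.coe_mul, ← EReal.coe_mul, ← EReal.coe_add, ← EReal.coe_sub,
      ← EReal.coe_add] at this
    exact_mod_cast this
  have hlog : Real.log (1 / (a₀ * a₁)) = -Real.log a₀ + -Real.log a₁ := by
    rw [one_div, Real.log_inv, Real.log_mul ha₀pos.ne' ha₁pos.ne']
    ring
  have hw2 : w ^ 2 ≤ (4 / K) * Real.log (1 / (a₀ * a₁)) + 8 * ε / K := by
    rw [hlog]
    have h8 : K / 8 * w ^ 2 ≤ (1/2) * (-Real.log a₀ + -Real.log a₁) + ε := by nlinarith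
    have hKpos : 0 < 8 / K := by positivity
    calc w ^ 2 = 8 / K * (K / 8 * w ^ 2) := by field_simp
      _ ≤ 8 / K * ((1/2) * (-Real.log a₀ + -Real.log a₁) + ε) :=
          mul_le_mul_of_nonneg_left h8 hKpos.le
      _ = (4 / K) * (-Real.log a₀ + -Real.log a₁) + 8 * ε / K := by
          field_simp
          ring
  have hDW : setSep A₀ A₁ ≤ W := setSep_le_W2 hA₀ hA₁ ν₀ ν₁ hc₀ hc₁
  have hDne : setSep A₀ A₁ ≠ ⊤ := ne_top_of_le_ne_top hWne hDW
  have hDt : (setSep A₀ A₁).toReal ≤ w := ENNReal.toReal_mono hWne hDW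
  have hfin : (setSep A₀ A₁).toReal ≤ Real.sqrt
      ((4 / K) * Real.log (1 / (a₀ * a₁)) + 8 * ε / K) := by
    have h2 : (setSep A₀ A₁).toReal ^ 2 ≤ (4 / K) * Real.log (1 / (a₀ * a₁)) + 8 * ε / K :=
      le_trans (by nlinarith [ENNReal.toReal_nonneg (a := setSep A₀ A₁)]) hw2
    calc (setSep A₀ A₁).toReal = Real.sqrt ((setSep A₀ A₁).toReal ^ 2) := by
          rw [Real.sqrt_sq ENNReal.toReal_nonneg]
      _ ≤ _ := Real.sqrt_le_sqrt h2
  calc setSep A₀ A₁ = ENNReal.ofReal (setSep A₀ A₁).toReal := (ENNReal.ofReal_toReal hDne).symm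
    _ ≤ _ := ENNReal.ofReal_le_ofReal hfin

/-- if an mm-space `X` satisfies `CD(K, ∞)` with `K > 0`, then for
any `κ₀, κ₁ > 0` with `κ₀ + κ₁ < 1`,
`Sep(X; κ₀, κ₁) ≤ √((4/K) log(1/(κ₀ κ₁)))`. -/
theorem sep_le_of_CD {X : Type*}
    [MetricSpace X] [CompleteSpace X] [TopologicalSpace.SeparableSpace X]
    [MeasurableSpace X] [BorelSpace X]
    (μ : Measure X) [IsProbabilityMeasure μ] [μ.IsOpenPosMeasure]
    (K : ℝ) (hK : 0 < K) (hCD : CDInfty μ K)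
    (κ₀ κ₁ : ℝ) (h₀ : 0 < κ₀) (h₁ : 0 < κ₁) (hsum : κ₀ + κ₁ < 1) :
    sep2 μ κ₀ κ₁ ≤ ENNReal.ofReal (Real.sqrt ((4 / K) * Real.log (1 / (κ₀ * κ₁)))) := by
  have hX : Nonempty X := by
    by_contra h
    rw [not_nonempty_iff] at h
    have h1 : μ Set.univ = 1 := measure_univ
    rw [Set.univ_eq_empty_iff.mpr h, measure_empty] at h1
    exact zero_ne_one h1
  obtain ⟨x₀⟩ := hX
  rw [sep2]
  refine iSup_le fun A₀ => iSup_le fun A₁ => iSup_le fun hA₀ => iSup_le fun hA₁ =>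
    iSup_le fun hκA₀ => iSup_le fun hκA₁ => ?_
  have hδmin : 0 < min κ₀ κ₁ := lt_min h₀ h₁
  have hev : ∀ᶠ δ in nhdsWithin (0:ℝ) (Set.Ioi 0), setSep A₀ A₁ ≤
      ENNReal.ofReal (Real.sqrt
        ((4 / K) * Real.log (1 / ((κ₀ - δ) * (κ₁ - δ))) + 8 * δ / K)) := by
    filter_upwards [Ioo_mem_nhdsGT_of_mem ⟨le_refl (0:ℝ), hδmin⟩] with δ hδ
    obtain ⟨hδ0, hδm⟩ := hδ
    have hδ₀ : 0 < κ₀ - δ := by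
      have := lt_of_lt_of_le hδm (min_le_left κ₀ κ₁); linarith
    have hδ₁ : 0 < κ₁ - δ := by
      have := lt_of_lt_of_le hδm (min_le_right κ₀ κ₁); linarith
    have hball : ∀ (A : Set X) (κ : ℝ), 0 < κ - δ → ENNReal.ofReal κ ≤ μ A →
        ∀ᶠ n : ℕ in Filter.atTop,
          ENNReal.ofReal (κ - δ) < μ (A ∩ Metric.closedBall x₀ n) := by
      intro A κ hκδ hκA
      have hmono : Monotone (fun n : ℕ => A ∩ Metric.closedBall x₀ n) := by
        intro m n hmn
        exact Set.inter_subset_inter_right _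
          (Metric.closedBall_subset_closedBall (by exact_mod_cast hmn))
      have hUeq : ⋃ n : ℕ, A ∩ Metric.closedBall x₀ n = A := by
        rw [← Set.inter_iUnion]
        have hU : ⋃ n : ℕ, Metric.closedBall x₀ (n : ℝ) = Set.univ := by
          ext x
          simp only [Set.mem_iUnion, Metric.mem_closedBall, Set.mem_univ, iff_true]
          obtain ⟨n, hn⟩ := exists_nat_ge (dist x x₀)
          exact ⟨n, hn⟩
        rw [hU, Set.inter_univ]
      have htd := tendsto_measure_iUnion_atTop (μ := μ) hmono
      rw [hUeq] at htd
      have hlt : ENNReal.ofReal (κ - δ) < μ A :=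
        lt_of_lt_of_le ((ENNReal.ofReal_lt_ofReal_iff (by linarith)).2 (by linarith)) hκA
      exact htd.eventually_const_lt hlt
    obtain ⟨n, hn₀, hn₁⟩ :=
      ((hball A₀ κ₀ hδ₀ hκA₀).and (hball A₁ κ₁ hδ₁ hκA₁)).exists
    set A₀' := A₀ ∩ Metric.closedBall x₀ n with hA₀'def
    set A₁' := A₁ ∩ Metric.closedBall x₀ n with hA₁'def
    have hm₀' : MeasurableSet A₀' := hA₀.inter Metric.isClosed_closedBall.measurableSet
    have hm₁' : MeasurableSet A₁' := hA₁.inter Metric.isClosed_closedBall.measurableSet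
    have hz₀ : μ A₀' ≠ 0 :=
      (lt_of_le_of_lt zero_le hn₀).ne'
    have hz₁ : μ A₁' ≠ 0 :=
      (lt_of_le_of_lt zero_le hn₁).ne'
    have hkey := setSep_le_key μ K hK hCD hm₀' hm₁' x₀ (n : ℝ)
      Set.inter_subset_right Set.inter_subset_right hz₀ hz₁ δ hδ0
    have hanti : setSep A₀ A₁ ≤ setSep A₀' A₁' := by
      refine le_iInf₂ fun x hx => le_iInf₂ fun y hy => ?_
      exact le_trans (iInf₂_le x hx.1) (iInf₂_le y hy.1)
    refine le_trans (le_trans hanti hkey) (ENNReal.ofReal_le_ofReal ?_)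
    set a₀ : ℝ := (μ A₀').toReal with ha₀def
    set a₁ : ℝ := (μ A₁').toReal with ha₁def
    have hge₀ : κ₀ - δ ≤ a₀ :=
      (ENNReal.ofReal_le_iff_le_toReal (measure_ne_top μ A₀')).1 hn₀.le
    have hge₁ : κ₁ - δ ≤ a₁ :=
      (ENNReal.ofReal_le_iff_le_toReal (measure_ne_top μ A₁')).1 hn₁.le
    have ha₀pos : 0 < a₀ := lt_of_lt_of_le hδ₀ hge₀
    have ha₁pos : 0 < a₁ := lt_of_lt_of_le hδ₁ hge₁
    refine Real.sqrt_le_sqrt (add_le_add_left ?_ _)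
    refine mul_le_mul_of_nonneg_left ?_ (by positivity)
    refine Real.log_le_log (by positivity) ?_
    rw [div_le_div_iff₀ (by positivity) (by positivity)]
    nlinarith
  have htend : Filter.Tendsto (fun δ : ℝ => ENNReal.ofReal (Real.sqrt
      ((4 / K) * Real.log (1 / ((κ₀ - δ) * (κ₁ - δ))) + 8 * δ / K)))
      (nhdsWithin (0:ℝ) (Set.Ioi 0))
      (nhds (ENNReal.ofReal (Real.sqrt ((4 / K) * Real.log (1 / (κ₀ * κ₁)))))) := by
    have hcont : ContinuousAt (fun δ : ℝ => ENNReal.ofReal (Real.sqrt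
        ((4 / K) * Real.log (1 / ((κ₀ - δ) * (κ₁ - δ))) + 8 * δ / K))) 0 := by
      have hmul : ContinuousAt (fun δ : ℝ => (κ₀ - δ) * (κ₁ - δ)) 0 := by fun_prop
      have hne : (κ₀ - (0:ℝ)) * (κ₁ - 0) ≠ 0 := by
        simp only [sub_zero]; positivity
      have hdiv : ContinuousAt (fun δ : ℝ => 1 / ((κ₀ - δ) * (κ₁ - δ))) 0 :=
        ContinuousAt.div continuousAt_const hmul hne
      have hlogc : ContinuousAt (fun δ : ℝ =>
          Real.log (1 / ((κ₀ - δ) * (κ₁ - δ)))) 0 := by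
        refine (Real.continuousAt_log ?_).comp hdiv
        simp only [sub_zero]
        positivity
      refine ENNReal.continuous_ofReal.continuousAt.comp ?_
      refine Real.continuous_sqrt.continuousAt.comp ?_
      exact ((continuousAt_const.mul hlogc).add (by fun_prop))
    have h0 : (fun δ : ℝ => ENNReal.ofReal (Real.sqrt
        ((4 / K) * Real.log (1 / ((κ₀ - δ) * (κ₁ - δ))) + 8 * δ / K))) 0
        = ENNReal.ofReal (Real.sqrt ((4 / K) * Real.log (1 / (κ₀ * κ₁)))) := by norm_num
    have htw := hcont.continuousWithinAt (s := Set.Ioi (0:ℝ))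
    rw [ContinuousWithinAt] at htw
    convert htw using 3
    norm_num
  exact ge_of_tendsto htend hev
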